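/- Let P : Cᵒᵖ → BoolAlg be a Boolean doctrine over a category C with finite products, and let A = (A_X)_{X ∈ C} be a family with A_X ⊆ P(X) for each X ∈ C. Then the universal ideal for P generated by A is the family (I_X)_{X ∈ C} where I_X is the set of φ ∈ P(X) such that there are n, m ∈ ℕ (possibly 0), objects Y₁, …, Y_n ∈ C, elements α₁ ∈ A_{Y₁}, …, α_n ∈ A_{Y_n} and morphisms fⱼ : ∏_{i=1}^{n} Yᵢ → X (j = 1, …, m) with ⋀_{j=1}^{m} P(fⱼ)(φ) ≤ ⋁_{i=1}^{n} P(prᵢ)(αᵢ) in P(∏_{i=1}^{n} Yᵢ). -/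

import Mathlib

open CategoryTheory CategoryTheory.Limits Opposite

universe w v u v₁ u₁ v₂ u₂ v₃ u₃

namespace BooleanDoctrine

/-- Elements of a Boolean algebra in the category `BoolAlg` can be acted on by morphisms. -/
instance (X Y : BoolAlg) : FunLike (X ⟶ Y) X Y :=
  { coe := fun f => f.hom
    coe_injective := fun _ _ h => BoolAlg.hom_ext (DFunLike.coe_injective h) }

/-- A filter of a Boolean algebra: contains `⊤`, closed under binary meets, upward closed. -/
def IsBAFilter {A : Type*} [BooleanAlgebra A] (F : Set A) : Prop :=
  (⊤ : A) ∈ F ∧ (∀ a b : A, a ∈ F → b ∈ F → a ⊓ b ∈ F) ∧ ∀ a b : A, a ∈ F → a ≤ b → b ∈ F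

/-- The fiber of a Boolean doctrine at an object of the base category. -/
abbrev fiber {C : Type u₁} [Category.{v₁} C] (P : Cᵒᵖ ⥤ BoolAlg.{w}) (X : C) : Type w :=
  P.obj (op X)

/-- A universal filter for a Boolean doctrine `P : Cᵒᵖ ⥤ BoolAlg`. -/
def IsUniversalFilter {C : Type u₁} [Category.{v₁} C] [HasFiniteProducts C]
    (P : Cᵒᵖ ⥤ BoolAlg.{w}) (F : ∀ X : C, Set (P.obj (op X))) : Prop :=
  (∀ (X Y : C) (f : X ⟶ Y) (α : P.obj (op Y)), α ∈ F Y → P.map f.op α ∈ F X) ∧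
    ∀ X : C, IsBAFilter (F X)

/-- A universal ideal for a Boolean doctrine `P : Cᵒᵖ ⥤ BoolAlg`. -/
def IsUniversalIdeal {C : Type u₁} [Category.{v₁} C] [HasFiniteProducts C]
    (P : Cᵒᵖ ⥤ BoolAlg.{w}) (I : ∀ X : C, Set (P.obj (op X))) : Prop :=
  (∀ (X Y : C) (m : ℕ) (f : Fin m → (X ⟶ Y)) (α : P.obj (op Y)),
      (Finset.univ.inf fun j => P.map (f j).op α) ∈ I X → α ∈ I Y) ∧
    (∀ (X : C) (a b : P.obj (op X)), a ≤ b → b ∈ I X → a ∈ I X) ∧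
    (∀ (X₁ X₂ : C) (α₁ : P.obj (op X₁)) (α₂ : P.obj (op X₂)), α₁ ∈ I X₁ → α₂ ∈ I X₂ →
      P.map (prod.fst : X₁ ⨯ X₂ ⟶ X₁).op α₁ ⊔ P.map (prod.snd : X₁ ⨯ X₂ ⟶ X₂).op α₂ ∈
        I (X₁ ⨯ X₂)) ∧
    (⊥ : P.obj (op (⊤_ C))) ∈ I (⊤_ C)

/-- A universal ultrafilter for a Boolean doctrine `P : Cᵒᵖ ⥤ BoolAlg`. -/
def IsUniversalUltrafilter {C : Type u₁} [Category.{v₁} C] [HasFiniteProducts C]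
    (P : Cᵒᵖ ⥤ BoolAlg.{w}) (F : ∀ X : C, Set (P.obj (op X))) : Prop :=
  (∀ (X Y : C) (f : X ⟶ Y) (α : P.obj (op Y)), α ∈ F Y → P.map f.op α ∈ F X) ∧
    (∀ X : C, IsBAFilter (F X)) ∧
    (∀ (X₁ X₂ : C) (α₁ : P.obj (op X₁)) (α₂ : P.obj (op X₂)),
      P.map (prod.fst : X₁ ⨯ X₂ ⟶ X₁).op α₁ ⊔ P.map (prod.snd : X₁ ⨯ X₂ ⟶ X₂).op α₂ ∈
          F (X₁ ⨯ X₂) →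
        α₁ ∈ F X₁ ∨ α₂ ∈ F X₂) ∧
    (⊥ : P.obj (op (⊤_ C))) ∉ F (⊤_ C)

/-- Richness of a Boolean doctrine with respect to a family of subsets of the fibers. -/
def IsRich {C : Type u₁} [Category.{v₁} C] [HasFiniteProducts C]
    (P : Cᵒᵖ ⥤ BoolAlg.{w}) (F : ∀ X : C, Set (P.obj (op X))) : Prop :=
  ∀ (X : C) (α : P.obj (op X)), α ∉ F X → ∃ c : (⊤_ C) ⟶ X, P.map c.op α ∉ F (⊤_ C)

/-- The failure of the "universal closure" of `a` witnessed by a constant `c : ⊤ ⟶ X`. -/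
def IsRichAt {C : Type u₁} [Category.{v₁} C] [HasFiniteProducts C]
    (P : Cᵒᵖ ⥤ BoolAlg.{w}) (F : ∀ X : C, Set (P.obj (op X)))
    (X : C) (a : P.obj (op X)) : Prop :=
  ∃ c : (⊤_ C) ⟶ X, P.map c.op a ∉ F (⊤_ C)

/-- The universal filter generated by a family of subsets of the fibers: the intersection of
all universal filters containing the family componentwise. -/
def genUnivFilter {C : Type u₁} [Category.{v₁} C] [HasFiniteProducts C]
    (P : Cᵒᵖ ⥤ BoolAlg.{w}) (A : ∀ X : C, Set (P.obj (op X))) :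
    ∀ X : C, Set (P.obj (op X)) := fun X =>
  {φ | ∀ G : ∀ X' : C, Set (P.obj (op X')),
    IsUniversalFilter P G → (∀ X', A X' ⊆ G X') → φ ∈ G X}

/-- The universal ideal generated by a family of subsets of the fibers: the intersection of
all universal ideals containing the family componentwise. -/
def genUnivIdeal {C : Type u₁} [Category.{v₁} C] [HasFiniteProducts C]
    (P : Cᵒᵖ ⥤ BoolAlg.{w}) (A : ∀ X : C, Set (P.obj (op X))) :
    ∀ X : C, Set (P.obj (op X)) := fun X =>
  {φ | ∀ J : ∀ X' : C, Set (P.obj (op X')),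
    IsUniversalIdeal P J → (∀ X', A X' ⊆ J X') → φ ∈ J X}

/-- The family of subsets of the fibers placing the element `α i` in the component `Y i`. -/
def familyOfPoints {C : Type u₁} [Category.{v₁} C] (P : Cᵒᵖ ⥤ BoolAlg.{w}) {ι : Type u₃}
    (Y : ι → C) (α : ∀ i, P.obj (op (Y i))) : ∀ X : C, Set (P.obj (op X)) := fun X =>
  {a | ∃ (i : ι) (h : Y i = X), a = P.map (eqToHom h.symm).op (α i)}

/-- The subsets doctrine, sending a set to its powerset Boolean algebra and a function to
its preimage map. -/
def subsetsDoctrine : (Type v)ᵒᵖ ⥤ BoolAlg.{v} where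
  obj X := BoolAlg.of (Set X.unop)
  map f := BoolAlg.ofHom
    { toFun := fun S => f.unop ⁻¹' S
      map_sup' := fun _ _ => rfl
      map_inf' := fun _ _ => rfl
      map_top' := rfl
      map_bot' := rfl }
  map_id _ := rfl
  map_comp _ _ := rfl

/-- A Boolean doctrine morphism: a finite-product-preserving functor together with a
natural transformation. -/
structure DoctrineHom {C : Type u₁} [Category.{v₁} C] {D : Type u₂} [Category.{v₂} D]
    (P : Cᵒᵖ ⥤ BoolAlg.{w}) (R : Dᵒᵖ ⥤ BoolAlg.{w}) where
  functor : C ⥤ D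
  preserves : PreservesFiniteProducts functor
  trans : P ⟶ functor.op ⋙ R

/-- Composition of Boolean doctrine morphisms. -/
def DoctrineHom.comp {C : Type u₁} [Category.{v₁} C] {D : Type u₂} [Category.{v₂} D]
    {E : Type u₃} [Category.{v₃} E]
    {P : Cᵒᵖ ⥤ BoolAlg.{w}} {R : Dᵒᵖ ⥤ BoolAlg.{w}} {S : Eᵒᵖ ⥤ BoolAlg.{w}}
    (Φ : DoctrineHom P R) (Ψ : DoctrineHom R S) : DoctrineHom P S where
  functor := Φ.functor ⋙ Ψ.functor
  preserves := by
    have := Φ.preserves; have := Ψ.preserves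
    infer_instance
  trans := Φ.trans ≫ Functor.whiskerLeft Φ.functor.op Ψ.trans

/-- A first-order structure on a Boolean doctrine: fiberwise right adjoints to reindexing
along first projections, satisfying the Beck–Chevalley condition. -/
structure FOStructure {C : Type u₁} [Category.{v₁} C] [HasFiniteProducts C]
    (P : Cᵒᵖ ⥤ BoolAlg.{w}) where
  fa : ∀ X Y : C, P.obj (op (X ⨯ Y)) → P.obj (op X)
  adj : ∀ (X Y : C) (α : P.obj (op X)) (β : P.obj (op (X ⨯ Y))),
      α ≤ fa X Y β ↔ P.map (prod.fst : X ⨯ Y ⟶ X).op α ≤ β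
  bc : ∀ (X X' Y : C) (f : X' ⟶ X) (β : P.obj (op (X ⨯ Y))),
      P.map f.op (fa X Y β) = fa X' Y (P.map (prod.map f (𝟙 Y)).op β)

/-- The existential quantifier `∃ = ¬∀¬` associated to a first-order structure. -/
noncomputable def FOStructure.ex {C : Type u₁} [Category.{v₁} C] [HasFiniteProducts C]
    {P : Cᵒᵖ ⥤ BoolAlg.{w}} (fo : FOStructure P) (X Y : C)
    (β : P.obj (op (X ⨯ Y))) : P.obj (op X) :=
  (fo.fa X Y βᶜ)ᶜ

/-- The canonical comparison morphism `M X ⨯ M Y ⟶ M (X ⨯ Y)` of a Boolean doctrine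
morphism, inverse to the product comparison morphism. -/
noncomputable def DoctrineHom.prodPair {C : Type u₁} [Category.{v₁} C] [HasFiniteProducts C]
    {D : Type u₂} [Category.{v₂} D] [HasFiniteProducts D]
    {P : Cᵒᵖ ⥤ BoolAlg.{w}} {R : Dᵒᵖ ⥤ BoolAlg.{w}} (Φ : DoctrineHom P R) (X Y : C) :
    (Φ.functor.obj X ⨯ Φ.functor.obj Y) ⟶ Φ.functor.obj (X ⨯ Y) :=
  letI := Φ.preserves
  (PreservesLimitPair.iso Φ.functor X Y).inv

/-- The image of an element of `P (X ⨯ Y)` in `R (M X ⨯ M Y)`, transported along the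
canonical isomorphism `M (X ⨯ Y) ≅ M X ⨯ M Y`. -/
noncomputable def DoctrineHom.transProd {C : Type u₁} [Category.{v₁} C] [HasFiniteProducts C]
    {D : Type u₂} [Category.{v₂} D] [HasFiniteProducts D]
    {P : Cᵒᵖ ⥤ BoolAlg.{w}} {R : Dᵒᵖ ⥤ BoolAlg.{w}} (Φ : DoctrineHom P R) (X Y : C)
    (α : P.obj (op (X ⨯ Y))) : R.obj (op (Φ.functor.obj X ⨯ Φ.functor.obj Y)) :=
  R.map (Φ.prodPair X Y).op (Φ.trans.app (op (X ⨯ Y)) α)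

/-- A Boolean doctrine morphism between first-order Boolean doctrines is first-order when it
commutes with the universal quantifiers. -/
def DoctrineHom.IsFO {C : Type u₁} [Category.{v₁} C] [HasFiniteProducts C]
    {D : Type u₂} [Category.{v₂} D] [HasFiniteProducts D]
    {P : Cᵒᵖ ⥤ BoolAlg.{w}} {R : Dᵒᵖ ⥤ BoolAlg.{w}} (Φ : DoctrineHom P R)
    (foP : FOStructure P) (foR : FOStructure R) : Prop :=
  ∀ (X Y : C) (β : P.obj (op (X ⨯ Y))),
    (Φ.trans.app (op X) (foP.fa X Y β) : R.obj (op (Φ.functor.obj X))) =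
      foR.fa (Φ.functor.obj X) (Φ.functor.obj Y) (Φ.transProd X Y β)

/-- The Boolean doctrine morphism with identity functor part induced by a natural
transformation between two doctrines over the same base. -/
def idDoctrineHom {C : Type u₁} [Category.{v₁} C] {P Q : Cᵒᵖ ⥤ BoolAlg.{w}} (η : P ⟶ Q) :
    DoctrineHom P Q where
  functor := 𝟭 C
  preserves := inferInstance
  trans := η

/-- A quantifier completion of a Boolean doctrine `P`: a first-order Boolean doctrine `Q`
over the same base category together with a Boolean doctrine morphism `(𝟭 C, ι) : P ⟶ Q`
whose functor part is the identity, such that every Boolean doctrine morphism from `P` to a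
first-order Boolean doctrine factors uniquely through it via a first-order Boolean doctrine
morphism. -/
structure QuantifierCompletion.{w', v', u', v₁', u₁'} {C : Type u₁'} [Category.{v₁'} C]
    [HasFiniteProducts C] (P : Cᵒᵖ ⥤ BoolAlg.{w'}) where
  Q : Cᵒᵖ ⥤ BoolAlg.{w'}
  fo : FOStructure Q
  ι : P ⟶ Q
  univ : ∀ {D : Type u'} [Category.{v'} D] [HasFiniteProducts D]
      (R : Dᵒᵖ ⥤ BoolAlg.{w'}) (foR : FOStructure R) (Φ : DoctrineHom P R),
      ∃! Ψ : DoctrineHom Q R, Ψ.IsFO fo foR ∧ Φ = (idDoctrineHom ι).comp Ψ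

/-- A propositional model of a Boolean doctrine: a Boolean doctrine morphism to the
subsets doctrine. -/
abbrev PropModel {C : Type u} [Category.{v} C] (P : Cᵒᵖ ⥤ BoolAlg.{v}) :=
  DoctrineHom P subsetsDoctrine.{v}

/-- The subset of `M X` interpreting an element `α ∈ P X` in a propositional model. -/
def PropModel.interp {C : Type u} [Category.{v} C] {P : Cᵒᵖ ⥤ BoolAlg.{v}}
    (M : PropModel P) {X : C} (α : P.obj (op X)) : Set (M.functor.obj X) :=
  M.trans.app (op X) α



/-- The object map of a Boolean doctrine morphism. -/
abbrev DoctrineHom.onObj {C : Type u₁} [Category.{v₁} C] {D : Type u₂} [Category.{v₂} D]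
    {P : Cᵒᵖ ⥤ BoolAlg.{w}} {R : Dᵒᵖ ⥤ BoolAlg.{w}} (Φ : DoctrineHom P R) (X : C) : D :=
  Φ.functor.obj X

/-- The component at `X` of the natural transformation of a Boolean doctrine morphism,
applied to an element of the fiber. -/
abbrev DoctrineHom.appAt {C : Type u₁} [Category.{v₁} C] {D : Type u₂} [Category.{v₂} D]
    {P : Cᵒᵖ ⥤ BoolAlg.{w}} {R : Dᵒᵖ ⥤ BoolAlg.{w}} (Φ : DoctrineHom P R) (X : C)
    (a : P.obj (op X)) : R.obj (op (Φ.functor.obj X)) :=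
  Φ.trans.app (op X) a

section AuxStmt11
open Finset

instance (X Y : BoolAlg) : BoundedLatticeHomClass (X ⟶ Y) X Y where
  map_sup f := map_sup f.hom
  map_inf f := map_inf f.hom
  map_top f := map_top f.hom
  map_bot f := map_bot f.hom

variable {C : Type u₁} [Category.{v₁} C] (P : Cᵒᵖ ⥤ BoolAlg.{w})

lemma aux_map_comp {X Y Z : C} (f : X ⟶ Y) (g : Y ⟶ Z) (a : P.obj (op Z)) :
    P.map (f ≫ g).op a = P.map f.op (P.map g.op a) := by
  rw [op_comp, P.map_comp]; rfl

lemma aux_map_id {X : C} (a : P.obj (op X)) : P.map (𝟙 X).op a = a := by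
  rw [op_id, P.map_id]; rfl

lemma aux_mem_tr (A : ∀ X : C, Set (P.obj (op X))) {X Y : C} (h : X = Y)
    {a : P.obj (op Y)} (ha : a ∈ A Y) : P.map (eqToHom h).op a ∈ A X := by
  subst h; simpa [aux_map_id] using ha

section Order
variable {α : Type*} {ι κ : Type*} [Fintype ι] [Fintype κ]

lemma aux_inf_univ_equiv [SemilatticeInf α] [OrderTop α] (e : ι ≃ κ) (g : κ → α) :
    (univ.inf fun i => g (e i)) = univ.inf g :=
  le_antisymm
    (Finset.le_inf fun k _ => by
      simpa using Finset.inf_le (f := fun i => g (e i)) (mem_univ (e.symm k)))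
    (Finset.le_inf fun i _ => Finset.inf_le (mem_univ (e i)))

lemma aux_sup_univ_add [SemilatticeSup α] [OrderBot α] {m n : ℕ} (h : Fin (m + n) → α) :
    univ.sup h = (univ.sup fun i => h (Fin.castAdd n i)) ⊔ (univ.sup fun i => h (Fin.natAdd m i)) := by
  refine le_antisymm (Finset.sup_le fun i _ => ?_) (sup_le (Finset.sup_le fun i _ => ?_)
    (Finset.sup_le fun i _ => ?_))
  · induction i using Fin.addCases with
    | left j => exact le_sup_of_le_left (Finset.le_sup (f := fun i => h (Fin.castAdd n i)) (mem_univ j))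
    | right j => exact le_sup_of_le_right (Finset.le_sup (f := fun i => h (Fin.natAdd m i)) (mem_univ j))
  · exact Finset.le_sup (mem_univ _)
  · exact Finset.le_sup (mem_univ _)

lemma aux_sup_univ_succ [SemilatticeSup α] [OrderBot α] {n : ℕ} (h : Fin (n + 1) → α) :
    univ.sup h = h 0 ⊔ univ.sup fun i => h (Fin.succ i) := by
  rw [Fin.univ_succ, Finset.sup_cons, Finset.sup_map]; rfl

lemma aux_inf_fin_one [SemilatticeInf α] [OrderTop α] (h : Fin 1 → α) :
    univ.inf h = h 0 := by simp [Finset.univ_unique]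

lemma aux_sup_fin_one [SemilatticeSup α] [OrderBot α] (h : Fin 1 → α) :
    univ.sup h = h 0 := by simp [Finset.univ_unique]

end Order

variable [HasFiniteProducts C]

/-- The witness predicate. -/
def Wit (A : ∀ X : C, Set (P.obj (op X))) (X : C) (φ : P.obj (op X)) : Prop :=
  ∃ (n m : ℕ) (Y : Fin n → C) (α : ∀ i, P.obj (op (Y i)))
    (f : Fin m → ((∏ᶜ Y) ⟶ X)),
    (∀ i, α i ∈ A (Y i)) ∧
      (Finset.univ.inf fun j => P.map (f j).op φ) ≤
        Finset.univ.sup fun i => P.map (Pi.π Y i).op (α i)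

variable {P}

lemma Wit_of_mem {A : ∀ X : C, Set (P.obj (op X))} {X : C} {a : P.obj (op X)}
    (ha : a ∈ A X) : Wit P A X a := by
  refine ⟨1, 1, fun _ => X, fun _ => a, fun _ => Pi.π (fun _ : Fin 1 => X) 0, fun _ => ha, ?_⟩
  rw [aux_inf_fin_one, aux_sup_fin_one]

lemma Wit_down {A : ∀ X : C, Set (P.obj (op X))} {X : C} {a b : P.obj (op X)}
    (hab : a ≤ b) (hb : Wit P A X b) : Wit P A X a := by
  obtain ⟨n, m, Y, α, f, hα, hle⟩ := hb
  exact ⟨n, m, Y, α, f, hα,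
    le_trans (Finset.inf_mono_fun fun j _ => OrderHomClass.mono _ hab) hle⟩

lemma Wit_bot {A : ∀ X : C, Set (P.obj (op X))} :
    Wit P A (⊤_ C) (⊥ : P.obj (op (⊤_ C))) := by
  refine ⟨0, 1, Fin.elim0, fun i => i.elim0, fun _ => terminal.from _, fun i => i.elim0, ?_⟩
  rw [aux_inf_fin_one]
  simp [map_bot]

lemma Wit_reflect {A : ∀ X : C, Set (P.obj (op X))} {X Y : C} {m : ℕ}
    (f : Fin m → (X ⟶ Y)) (a : P.obj (op Y))
    (h : Wit P A X (Finset.univ.inf fun j => P.map (f j).op a)) : Wit P A Y a := by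
  obtain ⟨n, m', Z, β, g, hβ, hle⟩ := h
  refine ⟨n, m' * m, Z, β,
    fun k => g (finProdFinEquiv.symm k).1 ≫ f (finProdFinEquiv.symm k).2, hβ, ?_⟩
  refine le_trans (le_of_eq ?_) hle
  rw [aux_inf_univ_equiv (finProdFinEquiv.symm)
    (fun p : Fin m' × Fin m => P.map (g p.1 ≫ f p.2).op a)]
  rw [← Finset.univ_product_univ, Finset.inf_product_left]
  refine Finset.inf_congr rfl fun j1 _ => ?_
  rw [map_finset_inf]
  exact Finset.inf_congr rfl fun j2 _ => aux_map_comp P _ _ _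


lemma Wit_join {A : ∀ X : C, Set (P.obj (op X))} {X₁ X₂ : C}
    {a : P.obj (op X₁)} {b : P.obj (op X₂)}
    (ha : Wit P A X₁ a) (hb : Wit P A X₂ b) :
    Wit P A (X₁ ⨯ X₂)
      (P.map (prod.fst : X₁ ⨯ X₂ ⟶ X₁).op a ⊔ P.map (prod.snd : X₁ ⨯ X₂ ⟶ X₂).op b) := by
  obtain ⟨n₁, m₁, Y₁, α₁, f₁, hα₁, hle₁⟩ := ha
  obtain ⟨n₂, m₂, Y₂, α₂, f₂, hα₂, hle₂⟩ := hb
  let Yc : Fin (n₁ + n₂) → C := Fin.append Y₁ Y₂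
  let αc : ∀ i, P.obj (op (Yc i)) :=
    Fin.addCases (fun j => P.map (eqToHom (Fin.append_left Y₁ Y₂ j)).op (α₁ j))
      (fun j => P.map (eqToHom (Fin.append_right Y₁ Y₂ j)).op (α₂ j))
  let p₁ : (∏ᶜ Yc) ⟶ ∏ᶜ Y₁ :=
    Pi.lift fun j => Pi.π Yc (Fin.castAdd n₂ j) ≫ eqToHom (Fin.append_left Y₁ Y₂ j)
  let p₂ : (∏ᶜ Yc) ⟶ ∏ᶜ Y₂ :=
    Pi.lift fun j => Pi.π Yc (Fin.natAdd n₁ j) ≫ eqToHom (Fin.append_right Y₁ Y₂ j)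
  refine ⟨n₁ + n₂, m₁ * m₂, Yc, αc,
    fun k => prod.lift (p₁ ≫ f₁ (finProdFinEquiv.symm k).1)
      (p₂ ≫ f₂ (finProdFinEquiv.symm k).2), ?_, ?_⟩
  · intro i
    induction i using Fin.addCases with
    | left j => rw [show αc (Fin.castAdd n₂ j)
          = P.map (eqToHom (Fin.append_left Y₁ Y₂ j)).op (α₁ j) from Fin.addCases_left j]
                exact aux_mem_tr P A _ (hα₁ j)
    | right j => rw [show αc (Fin.natAdd n₁ j)
          = P.map (eqToHom (Fin.append_right Y₁ Y₂ j)).op (α₂ j) from Fin.addCases_right j]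
                 exact aux_mem_tr P A _ (hα₂ j)
  · -- the inequality
    have hsupL : (univ.sup fun j => P.map (Pi.π Yc (Fin.castAdd n₂ j)).op (αc (Fin.castAdd n₂ j)))
        = P.map p₁.op (univ.sup fun j => P.map (Pi.π Y₁ j).op (α₁ j)) := by
      rw [map_finset_sup]
      refine Finset.sup_congr rfl fun j _ => ?_
      rw [show αc (Fin.castAdd n₂ j)
          = P.map (eqToHom (Fin.append_left Y₁ Y₂ j)).op (α₁ j) from Fin.addCases_left j]
      rw [Function.comp_apply, ← aux_map_comp, ← aux_map_comp]
      congr 1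
      simp [p₁]
    have hsupR : (univ.sup fun j => P.map (Pi.π Yc (Fin.natAdd n₁ j)).op (αc (Fin.natAdd n₁ j)))
        = P.map p₂.op (univ.sup fun j => P.map (Pi.π Y₂ j).op (α₂ j)) := by
      rw [map_finset_sup]
      refine Finset.sup_congr rfl fun j _ => ?_
      rw [show αc (Fin.natAdd n₁ j)
          = P.map (eqToHom (Fin.append_right Y₁ Y₂ j)).op (α₂ j) from Fin.addCases_right j]
      rw [Function.comp_apply, ← aux_map_comp, ← aux_map_comp]
      congr 1
      simp [p₂]
    have hinf : (univ.inf fun k : Fin (m₁ * m₂) =>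
        P.map ((prod.lift (p₁ ≫ f₁ (finProdFinEquiv.symm k).1)
          (p₂ ≫ f₂ (finProdFinEquiv.symm k).2) : (∏ᶜ Yc) ⟶ X₁ ⨯ X₂)).op
          (P.map (prod.fst : X₁ ⨯ X₂ ⟶ X₁).op a ⊔ P.map (prod.snd : X₁ ⨯ X₂ ⟶ X₂).op b))
        = P.map p₁.op (univ.inf fun j => P.map (f₁ j).op a)
          ⊔ P.map p₂.op (univ.inf fun j => P.map (f₂ j).op b) := by
      rw [aux_inf_univ_equiv (finProdFinEquiv.symm)
        (fun p : Fin m₁ × Fin m₂ => P.map ((prod.lift (p₁ ≫ f₁ p.1) (p₂ ≫ f₂ p.2)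
          : (∏ᶜ Yc) ⟶ X₁ ⨯ X₂)).op
          (P.map (prod.fst : X₁ ⨯ X₂ ⟶ X₁).op a ⊔ P.map (prod.snd : X₁ ⨯ X₂ ⟶ X₂).op b))]
      rw [← Finset.univ_product_univ, Finset.inf_product_left]
      rw [map_finset_inf, map_finset_inf, Finset.inf_sup_distrib_right]
      refine Finset.inf_congr rfl fun j1 _ => ?_
      rw [Finset.inf_sup_distrib_left]
      refine Finset.inf_congr rfl fun j2 _ => ?_
      rw [map_sup, ← aux_map_comp, ← aux_map_comp]
      simp only [Function.comp_apply]
      rw [prod.lift_fst, prod.lift_snd, aux_map_comp, aux_map_comp]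
    rw [hinf, aux_sup_univ_add, hsupL, hsupR]
    exact sup_le_sup (OrderHomClass.mono _ hle₁) (OrderHomClass.mono _ hle₂)


lemma aux_pullback {J : ∀ X : C, Set (P.obj (op X))} (hJ : IsUniversalIdeal P J)
    {X Y : C} (f : X ⟶ Y) {β : P.obj (op Y)} (h : P.map f.op β ∈ J X) : β ∈ J Y := by
  refine hJ.1 X Y 1 (fun _ => f) β ?_
  rw [aux_inf_fin_one (fun _ : Fin 1 => P.map f.op β)]
  exact h

lemma aux_supMem {J : ∀ X : C, Set (P.obj (op X))} (hJ : IsUniversalIdeal P J) :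
    ∀ (n : ℕ) (Y : Fin n → C) (α : ∀ i, P.obj (op (Y i))),
      (∀ i, α i ∈ J (Y i)) →
      (univ.sup fun i => P.map (Pi.π Y i).op (α i)) ∈ J (∏ᶜ Y) := by
  intro n
  induction n with
  | zero =>
    intro Y α hα
    have hbot : (univ.sup fun i => P.map (Pi.π Y i).op (α i)) = ⊥ := by
      simp [Finset.univ_eq_empty]
    rw [hbot]
    refine aux_pullback hJ (Pi.lift (fun i => i.elim0) : (⊤_ C) ⟶ ∏ᶜ Y) ?_
    rw [map_bot]
    exact hJ.2.2.2
  | succ n ih =>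
    intro Y α hα
    have hs := ih (fun i => Y (Fin.succ i)) (fun i => α (Fin.succ i)) (fun i => hα (Fin.succ i))
    have hb := hJ.2.2.1 (Y 0) (∏ᶜ fun i => Y (Fin.succ i)) (α 0)
      (univ.sup fun i => P.map (Pi.π (fun i => Y (Fin.succ i)) i).op (α (Fin.succ i))) (hα 0) hs
    set β := P.map (prod.fst : Y 0 ⨯ (∏ᶜ fun i => Y (Fin.succ i)) ⟶ Y 0).op (α 0) ⊔
      P.map (prod.snd : Y 0 ⨯ (∏ᶜ fun i => Y (Fin.succ i)) ⟶ _).op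
        (univ.sup fun i => P.map (Pi.π (fun i => Y (Fin.succ i)) i).op (α (Fin.succ i))) with hβ
    let h : (∏ᶜ Y) ⟶ Y 0 ⨯ (∏ᶜ fun i => Y (Fin.succ i)) :=
      prod.lift (Pi.π Y 0) (Pi.lift fun i => Pi.π Y (Fin.succ i))
    let h' : (Y 0 ⨯ (∏ᶜ fun i => Y (Fin.succ i))) ⟶ ∏ᶜ Y :=
      Pi.lift (fun i => Fin.cases prod.fst (fun j => prod.snd ≫ Pi.π (fun i => Y (Fin.succ i)) j) i)
    have hcomp : h' ≫ h = 𝟙 _ := by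
      apply Limits.prod.hom_ext
      · simp only [h, h', Category.assoc, prod.lift_fst, limit.lift_π, Fan.mk_pt, Fan.mk_π_app, Category.id_comp]
        rfl
      · apply Pi.hom_ext
        intro j
        simp only [h, h', Category.assoc, prod.lift_snd, limit.lift_π, Fan.mk_pt, Fan.mk_π_app, Category.id_comp]
        rfl
    have hkey : (univ.sup fun i => P.map (Pi.π Y i).op (α i)) = P.map h.op β := by
      rw [hβ, map_sup, ← aux_map_comp, ← aux_map_comp, map_finset_sup]
      rw [aux_sup_univ_succ (fun i => P.map (Pi.π Y i).op (α i))]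
      congr 1
      · congr 2
        exact congrArg (fun g => P.map (Quiver.Hom.op g)) (prod.lift_fst _ _).symm
      · refine Finset.sup_congr rfl fun j _ => ?_
        rw [Function.comp_apply, ← aux_map_comp]
        congr 2
        exact congrArg (fun g => P.map (Quiver.Hom.op g)) (by simp only [h]; erw [prod.lift_snd]; simp)
    rw [hkey]
    refine aux_pullback hJ h' ?_
    rw [← aux_map_comp, hcomp, aux_map_id]
    exact hb

lemma Wit_min {A J : ∀ X : C, Set (P.obj (op X))} (hJ : IsUniversalIdeal P J)
    (hAJ : ∀ X : C, A X ⊆ J X) {X : C} {φ : P.obj (op X)} (h : Wit P A X φ) : φ ∈ J X := by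
  obtain ⟨n, m, Y, α, f, hα, hle⟩ := h
  have hsup := aux_supMem hJ n Y α (fun i => hAJ _ (hα i))
  exact hJ.1 _ _ m f φ (hJ.2.1 _ _ _ hle hsup)


end AuxStmt11

theorem stmt11 {C : Type u₁} [Category.{v₁} C] [HasFiniteProducts C]
    (P : Cᵒᵖ ⥤ BoolAlg.{w}) (A Igen : ∀ X : C, Set (P.obj (op X)))
    (hIgen : ∀ (X : C) (φ : P.obj (op X)),
      φ ∈ Igen X ↔
        ∃ (n m : ℕ) (Y : Fin n → C) (α : ∀ i, P.obj (op (Y i)))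
          (f : Fin m → ((∏ᶜ Y) ⟶ X)),
          (∀ i, α i ∈ A (Y i)) ∧
            (Finset.univ.inf fun j => P.map (f j).op φ) ≤
              Finset.univ.sup fun i => P.map (Pi.π Y i).op (α i)) :
    IsUniversalIdeal P Igen ∧ (∀ X : C, A X ⊆ Igen X) ∧
      ∀ J : ∀ X : C, Set (P.obj (op X)),
        IsUniversalIdeal P J → (∀ X : C, A X ⊆ J X) → ∀ X : C, Igen X ⊆ J X := by
  refine ⟨⟨?_, ?_, ?_, ?_⟩, ?_, ?_⟩
  · intro X Y m f α h
    rw [hIgen]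
    exact Wit_reflect f α ((hIgen _ _).1 h)
  · intro X a b hab hb
    rw [hIgen]
    exact Wit_down hab ((hIgen _ _).1 hb)
  · intro X₁ X₂ a b ha hb
    rw [hIgen]
    exact Wit_join ((hIgen _ _).1 ha) ((hIgen _ _).1 hb)
  · rw [hIgen]
    exact Wit_bot
  · intro X a ha
    rw [hIgen]
    exact Wit_of_mem ha
  · intro J hJ hAJ X φ hφ
    exact Wit_min hJ hAJ ((hIgen _ _).1 hφ)


end BooleanDoctrine
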